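/- Let Z_1, Z_2, … be an infinite sequence of independent standard normal random variables, and for each n let Z_(1) and Z_(n) denote the minimum and maximum of Z_1, …, Z_n. Set M_n = √(2 log n) · Z_(n) − 2 log n + (1/2) log(4π log n) and m_n = √(2 log n) · Z_(1) + 2 log n − (1/2) log(4π log n). Then the pair (M_n, m_n) converges jointly in distribution to the law of (Y, −W), where Y and W are independent random variables each having the standard Gumbel distribution G_3 with cumulative distribution function exp(−e^{−z}). -/

import Mathlib

open MeasureTheory ProbabilityTheory Filter Topology BoundedContinuousFunction

/-- The `k`-th order statistic (1-based rank) of the values `v : Fin n → ℝ`: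
the `k`-th smallest value of the sample. -/
noncomputable def orderStat {n : ℕ} (v : Fin n → ℝ) (k : ℕ) : ℝ :=
  if h : k - 1 < n then v (Tuple.sort v ⟨k - 1, h⟩) else 0



lemma orderStat_max_mem {n : ℕ} (hn : 0 < n) (v : Fin n → ℝ) :
    ∃ j, orderStat v n = v j := by
  rw [orderStat, dif_pos (by omega : n - 1 < n)]
  exact ⟨_, rfl⟩

lemma le_orderStat_max {n : ℕ} (hn : 0 < n) (v : Fin n → ℝ) (j : Fin n) :
    v j ≤ orderStat v n := by
  rw [orderStat, dif_pos (by omega : n - 1 < n)]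
  obtain ⟨i, rfl⟩ := (Tuple.sort v).surjective j
  exact Tuple.monotone_sort v (by simp [Fin.le_def]; omega : i ≤ ⟨n - 1, by omega⟩)

lemma orderStat_max_le_iff {n : ℕ} (hn : 0 < n) (v : Fin n → ℝ) (u : ℝ) :
    orderStat v n ≤ u ↔ ∀ j, v j ≤ u := by
  constructor
  · exact fun h j => (le_orderStat_max hn v j).trans h
  · intro h
    obtain ⟨j, hj⟩ := orderStat_max_mem hn v
    rw [hj]; exact h j

lemma orderStat_min_mem {n : ℕ} (hn : 0 < n) (v : Fin n → ℝ) :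
    ∃ j, orderStat v 1 = v j := by
  rw [orderStat, dif_pos (by omega : 1 - 1 < n)]
  exact ⟨_, rfl⟩

lemma orderStat_min_le {n : ℕ} (hn : 0 < n) (v : Fin n → ℝ) (j : Fin n) :
    orderStat v 1 ≤ v j := by
  rw [orderStat, dif_pos (by omega : 1 - 1 < n)]
  obtain ⟨i, rfl⟩ := (Tuple.sort v).surjective j
  exact Tuple.monotone_sort v (by simp [Fin.le_def] : (⟨1-1, by omega⟩ : Fin n) ≤ i)

lemma lt_orderStat_min_iff {n : ℕ} (hn : 0 < n) (v : Fin n → ℝ) (w : ℝ) :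
    w < orderStat v 1 ↔ ∀ j, w < v j := by
  constructor
  · exact fun h j => h.trans_le (orderStat_min_le hn v j)
  · intro h
    obtain ⟨j, hj⟩ := orderStat_min_mem hn v
    rw [hj]; exact h j

lemma orderStat_max_eq_sup' {n : ℕ} (hn : 0 < n) (v : Fin n → ℝ) :
    orderStat v n = Finset.univ.sup' (by simpa [Finset.univ_nonempty_iff] using Fin.pos_iff_nonempty.mp hn) v := by
  apply le_antisymm
  · obtain ⟨j, hj⟩ := orderStat_max_mem hn v
    rw [hj]; exact Finset.le_sup' v (Finset.mem_univ j)
  · exact Finset.sup'_le _ _ fun j _ => le_orderStat_max hn v j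

lemma orderStat_min_eq_inf' {n : ℕ} (hn : 0 < n) (v : Fin n → ℝ) :
    orderStat v 1 = Finset.univ.inf' (by simpa [Finset.univ_nonempty_iff] using Fin.pos_iff_nonempty.mp hn) v := by
  apply le_antisymm
  · exact Finset.le_inf' _ _ fun j _ => orderStat_min_le hn v j
  · obtain ⟨j, hj⟩ := orderStat_min_mem hn v
    rw [hj]; exact Finset.inf'_le v (Finset.mem_univ j)

lemma measurable_orderStat_max {Ω : Type*} [MeasurableSpace Ω] {n : ℕ} (Z : ℕ → Ω → ℝ)
    (hmeas : ∀ i, Measurable (Z i)) :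
    Measurable (fun ω => orderStat (fun j : Fin n => Z j ω) n) := by
  rcases Nat.eq_zero_or_pos n with rfl | hn
  · simpa [orderStat] using measurable_const
  · simp only [fun ω => orderStat_max_eq_sup' hn (fun j : Fin n => Z j ω)]
    have : Measurable (Finset.univ.sup' (α := Ω → ℝ)
        (by simpa [Finset.univ_nonempty_iff] using Fin.pos_iff_nonempty.mp hn)
        (fun j : Fin n => Z j)) :=
      Finset.measurable_sup' _ (fun j _ => hmeas j)
    convert this using 1
    ext ω
    simp [Finset.sup'_apply]

lemma measurable_orderStat_min {Ω : Type*} [MeasurableSpace Ω] {n : ℕ} (Z : ℕ → Ω → ℝ)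
    (hmeas : ∀ i, Measurable (Z i)) :
    Measurable (fun ω => orderStat (fun j : Fin n => Z j ω) 1) := by
  rcases Nat.eq_zero_or_pos n with rfl | hn
  · simpa [orderStat] using measurable_const
  · simp only [fun ω => orderStat_min_eq_inf' hn (fun j : Fin n => Z j ω)]
    have : Measurable (Finset.univ.inf' (α := Ω → ℝ)
        (by simpa [Finset.univ_nonempty_iff] using Fin.pos_iff_nonempty.mp hn)
        (fun j : Fin n => Z j)) :=
      Finset.inf'_induction _ _ (fun _f hf _g hg => hf.inf hg) fun j _ => hmeas j
    convert this using 1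
    ext ω
    simp [Finset.inf'_apply]



noncomputable def phiN (x : ℝ) : ℝ := (Real.sqrt (2 * Real.pi))⁻¹ * Real.exp (-x^2/2)

lemma phiN_eq_gaussianPDFReal : phiN = gaussianPDFReal 0 1 := by
  ext x
  simp [phiN, gaussianPDFReal, neg_div]

lemma phiN_pos (x : ℝ) : 0 < phiN x := by
  apply mul_pos (inv_pos.mpr (Real.sqrt_pos.mpr (by positivity))) (Real.exp_pos _)

lemma continuous_phiN : Continuous phiN := by
  unfold phiN; fun_prop

lemma hasDerivAt_phiN (x : ℝ) : HasDerivAt phiN (-x * phiN x) x := by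
  have h1 : HasDerivAt (fun y : ℝ => -y^2/2) (-x) x := by
    have h := ((hasDerivAt_pow 2 x).neg).div_const 2
    exact h.congr_deriv (by norm_num; ring)
  have h2 := (h1.exp).const_mul (Real.sqrt (2 * Real.pi))⁻¹
  unfold phiN
  exact h2.congr_deriv (by ring)

lemma tendsto_phiN_atTop : Tendsto phiN atTop (𝓝 0) := by
  have h : Tendsto (fun x : ℝ => -x^2/2) atTop atBot := by
    apply Tendsto.atBot_div_const two_pos
    apply tendsto_neg_atBot_iff.mpr
    exact tendsto_pow_atTop two_ne_zero
  have h2 := (Real.tendsto_exp_atBot.comp h).const_mul (Real.sqrt (2 * Real.pi))⁻¹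
  rw [mul_zero] at h2
  exact h2.congr fun x => by simp [phiN, Function.comp]

noncomputable def TN (t : ℝ) : ℝ := ((gaussianReal 0 1) (Set.Ioi t)).toReal

lemma TN_eq_integral (t : ℝ) : TN t = ∫ x in Set.Ioi t, phiN x := by
  rw [TN, gaussianReal_apply_eq_integral 0 one_ne_zero, ENNReal.toReal_ofReal
    (setIntegral_nonneg measurableSet_Ioi fun x _ => gaussianPDFReal_nonneg 0 1 x),
    phiN_eq_gaussianPDFReal]

lemma integrableOn_phiN (s : Set ℝ) : IntegrableOn phiN s := by
  rw [phiN_eq_gaussianPDFReal]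
  exact (integrable_gaussianPDFReal 0 1).integrableOn

lemma integral_id_mul_phiN {t : ℝ} (ht : 0 < t) :
    ∫ x in Set.Ioi t, x * phiN x = phiN t := by
  have hderiv : ∀ x ∈ Set.Ici t, HasDerivAt (fun y => -phiN y) (x * phiN x) x := by
    intro x _
    exact (hasDerivAt_phiN x).neg.congr_deriv (by ring)
  have hpos : ∀ x ∈ Set.Ioi t, 0 ≤ x * phiN x := fun x hx =>
    mul_nonneg (le_of_lt (ht.trans hx)) (phiN_pos x).le
  have htend : Tendsto (fun y => -phiN y) atTop (𝓝 0) := by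
    simpa using tendsto_phiN_atTop.neg
  have := integral_Ioi_of_hasDerivAt_of_nonneg' hderiv hpos htend
  simpa using this

lemma integrableOn_id_mul_phiN {t : ℝ} (ht : 0 < t) :
    IntegrableOn (fun x => x * phiN x) (Set.Ioi t) := by
  have hderiv : ∀ x ∈ Set.Ici t, HasDerivAt (fun y => -phiN y) (x * phiN x) x := by
    intro x _
    exact (hasDerivAt_phiN x).neg.congr_deriv (by ring)
  have hpos : ∀ x ∈ Set.Ioi t, 0 ≤ x * phiN x := fun x hx =>
    mul_nonneg (le_of_lt (ht.trans hx)) (phiN_pos x).le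
  have htend : Tendsto (fun y => -phiN y) atTop (𝓝 0) := by
    simpa using tendsto_phiN_atTop.neg
  exact integrableOn_Ioi_deriv_of_nonneg' hderiv hpos htend

lemma mills_upper {t : ℝ} (ht : 0 < t) : TN t ≤ phiN t / t := by
  rw [TN_eq_integral]
  have h1 : ∫ x in Set.Ioi t, phiN x ≤ ∫ x in Set.Ioi t, (x / t) * phiN x := by
    apply setIntegral_mono_on (integrableOn_phiN _)
    · have : IntegrableOn (fun x => (1/t) * (x * phiN x)) (Set.Ioi t) :=
        (integrableOn_id_mul_phiN ht).const_mul _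
      apply this.congr_fun (fun x _ => by ring) measurableSet_Ioi
    · exact measurableSet_Ioi
    · intro x hx
      have h2 : (1 : ℝ) ≤ x / t := (one_le_div ht).mpr (le_of_lt hx)
      nlinarith [phiN_pos x, phiN_pos x]
  have h2 : ∫ x in Set.Ioi t, (x / t) * phiN x = phiN t / t := by
    have : ∀ x, (x / t) * phiN x = (1/t) * (x * phiN x) := fun x => by ring
    simp_rw [this]
    rw [integral_const_mul, integral_id_mul_phiN ht]
    ring
  linarith


section lower
-- derivative of  y ↦ -((y⁻¹ - (y⁻¹)^3) * phiN y)  is  (1 - 3*(y⁻¹)^4) * phiN y  for y > 0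
lemma hasDerivAt_millsAux {x : ℝ} (hx : 0 < x) :
    HasDerivAt (fun y => -((y⁻¹ - (y⁻¹)^3) * phiN y)) ((1 - 3*(x⁻¹)^4) * phiN x) x := by
  have hx' : x ≠ 0 := ne_of_gt hx
  have h1 : HasDerivAt (fun y : ℝ => y⁻¹ - (y⁻¹)^3)
      (-(x^2)⁻¹ - 3*(x⁻¹)^2 * (-(x^2)⁻¹)) x := by
    exact (hasDerivAt_inv hx').sub (((hasDerivAt_inv hx').pow 3).congr_deriv (by ring))
  have h2 := (h1.mul (hasDerivAt_phiN x)).neg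
  apply h2.congr_deriv
  field_simp
  ring

lemma millsAux_tendsto : Tendsto (fun y => -((y⁻¹ - (y⁻¹)^3) * phiN y)) atTop (𝓝 0) := by
  have h1 : Tendsto (fun y : ℝ => y⁻¹ - (y⁻¹)^3) atTop (𝓝 0) := by
    have : Tendsto (fun y : ℝ => y⁻¹) atTop (𝓝 0) := tendsto_inv_atTop_zero
    simpa using this.sub (this.pow 3)
  have := (h1.mul tendsto_phiN_atTop).neg
  simpa using this

lemma mills_lower {t : ℝ} (ht : 2 ≤ t) : (t⁻¹ - (t⁻¹)^3) * phiN t ≤ TN t := by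
  have ht0 : (0:ℝ) < t := lt_of_lt_of_le two_pos ht
  have hderiv : ∀ x ∈ Set.Ici t, HasDerivAt (fun y => -((y⁻¹ - (y⁻¹)^3) * phiN y))
      ((1 - 3*(x⁻¹)^4) * phiN x) x := fun x hx => hasDerivAt_millsAux (lt_of_lt_of_le ht0 hx)
  have hpos : ∀ x ∈ Set.Ioi t, 0 ≤ (1 - 3*(x⁻¹)^4) * phiN x := by
    intro x hx
    have hx2 : (2:ℝ) ≤ x := ht.trans (le_of_lt hx)
    have h0 : (0:ℝ) < x := lt_of_lt_of_le two_pos hx2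
    have : x⁻¹ ≤ 2⁻¹ := by
      apply inv_anti₀ two_pos hx2
    have h1 : (x⁻¹)^4 ≤ (2⁻¹:ℝ)^4 := by
      apply pow_le_pow_left₀ (inv_nonneg.mpr h0.le) this
    nlinarith [phiN_pos x]
  have key := integral_Ioi_of_hasDerivAt_of_nonneg' hderiv hpos millsAux_tendsto
  have hint : IntegrableOn (fun x => (1 - 3*(x⁻¹)^4) * phiN x) (Set.Ioi t) :=
    integrableOn_Ioi_deriv_of_nonneg' hderiv hpos millsAux_tendsto
  have hmono : ∫ x in Set.Ioi t, (1 - 3*(x⁻¹)^4) * phiN x ≤ ∫ x in Set.Ioi t, phiN x := by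
    apply setIntegral_mono_on hint (integrableOn_phiN _) measurableSet_Ioi
    intro x hx
    have h0 : (0:ℝ) < x := lt_of_lt_of_le two_pos (ht.trans (le_of_lt hx))
    nlinarith [phiN_pos x, sq_nonneg ((x⁻¹)^2), pow_pos (inv_pos.mpr h0) 4]
  rw [TN_eq_integral]
  calc (t⁻¹ - (t⁻¹)^3) * phiN t = 0 - -((t⁻¹ - (t⁻¹)^3) * phiN t) := by ring
  _ = ∫ x in Set.Ioi t, (1 - 3*(x⁻¹)^4) * phiN x := key.symm
  _ ≤ _ := hmono
end lower


noncomputable def cf (s : ℝ) : ℝ := (1/2) * Real.log (4 * Real.pi * s)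
noncomputable def Bf (s : ℝ) : ℝ := 2*s - cf s
noncomputable def Uf (x s : ℝ) : ℝ := (x + Bf s) / Real.sqrt (2*s)

lemma tendsto_sqrt_atTop' : Tendsto Real.sqrt atTop atTop := by
  refine tendsto_atTop.mpr fun b => ?_
  filter_upwards [eventually_ge_atTop (b^2 ⊔ 0)] with a ha
  calc b ≤ |b| := le_abs_self b
  _ = Real.sqrt (b^2) := (Real.sqrt_sq_eq_abs b).symm
  _ ≤ Real.sqrt a := Real.sqrt_le_sqrt (le_trans (le_max_left _ _) ha)

lemma tendsto_log_div_sqrt : Tendsto (fun s : ℝ => Real.log s / Real.sqrt s) atTop (𝓝 0) := by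
  have h1 : Tendsto (fun y : ℝ => 2 * (Real.log y / y)) atTop (𝓝 0) := by
    have := Real.tendsto_pow_log_div_mul_add_atTop 1 0 1 one_ne_zero
    simp only [pow_one, one_mul, add_zero] at this
    simpa using this.const_mul 2
  apply (h1.comp tendsto_sqrt_atTop').congr'
  filter_upwards [eventually_gt_atTop (0:ℝ)] with s hs
  have : Real.log s = 2 * Real.log (Real.sqrt s) := by
    rw [Real.log_sqrt hs.le]; ring
  simp only [Function.comp]
  rw [this]; ring

lemma tendsto_cf_div_sqrt : Tendsto (fun s => cf s / Real.sqrt s) atTop (𝓝 0) := by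
  have h1 : Tendsto (fun s : ℝ => ((1:ℝ)/2) * (Real.log (4*Real.pi) * (Real.sqrt s)⁻¹ + Real.log s / Real.sqrt s)) atTop (𝓝 0) := by
    have ha : Tendsto (fun s : ℝ => (Real.sqrt s)⁻¹) atTop (𝓝 0) :=
      tendsto_inv_atTop_zero.comp tendsto_sqrt_atTop'
    have := ((ha.const_mul (Real.log (4*Real.pi))).add tendsto_log_div_sqrt).const_mul ((1:ℝ)/2)
    simpa using this
  apply h1.congr'
  filter_upwards [eventually_gt_atTop (0:ℝ)] with s hs
  rw [cf, Real.log_mul (by positivity) (ne_of_gt hs)]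
  field_simp
  try ring

lemma tendsto_cf_div : Tendsto (fun s => cf s / s) atTop (𝓝 0) := by
  have h := tendsto_cf_div_sqrt.mul (tendsto_inv_atTop_zero.comp tendsto_sqrt_atTop')
  rw [mul_zero] at h
  apply h.congr'
  filter_upwards [eventually_gt_atTop (0:ℝ)] with s hs
  have hss : Real.sqrt s ≠ 0 := ne_of_gt (Real.sqrt_pos.mpr hs)
  have hms : Real.sqrt s * Real.sqrt s = s := Real.mul_self_sqrt hs.le
  simp only [Function.comp]
  rw [← div_eq_mul_inv, div_div, hms]

lemma tendsto_Bf_atTop : Tendsto Bf atTop atTop := by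
  apply tendsto_atTop_mono' _ _ tendsto_id
  filter_upwards [tendsto_cf_div.eventually_le_const zero_lt_one,
    eventually_gt_atTop (0:ℝ)] with s hle hs
  have : cf s ≤ s := by
    rw [div_le_iff₀ hs] at hle
    linarith
  simp only [Bf, id]
  linarith

lemma tendsto_ratio (x : ℝ) : Tendsto (fun s => (x + Bf s)/(2*s)) atTop (𝓝 1) := by
  have ht : Tendsto (fun s : ℝ => x * (2*s)⁻¹ + 1 - (cf s / s)/2) atTop (𝓝 1) := by
    have h1 : Tendsto (fun s : ℝ => (2*s)⁻¹) atTop (𝓝 0) :=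
      tendsto_inv_atTop_zero.comp (tendsto_id.const_mul_atTop two_pos)
    have := ((h1.const_mul x).add_const 1).sub (tendsto_cf_div.div_const 2)
    simpa using this
  apply ht.congr'
  filter_upwards [eventually_gt_atTop (0:ℝ)] with s hs
  rw [Bf]
  field_simp
  ring

lemma tendsto_sqrt_two_mul : Tendsto (fun s : ℝ => Real.sqrt (2*s)) atTop atTop :=
  tendsto_sqrt_atTop'.comp (tendsto_id.const_mul_atTop two_pos)

lemma Uf_eq_ratio_mul {x s : ℝ} (hs : 0 < s) :
    Uf x s = (x + Bf s)/(2*s) * Real.sqrt (2*s) := by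
  have h2 : (0:ℝ) < 2*s := by linarith
  have hA : Real.sqrt (2*s) * Real.sqrt (2*s) = 2*s := Real.mul_self_sqrt h2.le
  have hA0 : Real.sqrt (2*s) ≠ 0 := ne_of_gt (Real.sqrt_pos.mpr h2)
  rw [Uf, eq_comm, div_mul_eq_mul_div, div_eq_div_iff (ne_of_gt h2) hA0, mul_assoc, hA]

lemma tendsto_Uf_atTop (x : ℝ) : Tendsto (Uf x) atTop atTop := by
  have h := (tendsto_ratio x).pos_mul_atTop one_pos tendsto_sqrt_two_mul
  apply h.congr'
  filter_upwards [eventually_gt_atTop (0:ℝ)] with s hs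
  exact (Uf_eq_ratio_mul hs).symm


noncomputable def Ef (x s : ℝ) : ℝ :=
  s - (Uf x s)^2/2 - Real.log (Real.sqrt (2*Real.pi)) - Real.log (Uf x s)

noncomputable def PhiN (t : ℝ) : ℝ := ((gaussianReal 0 1) (Set.Iic t)).toReal

lemma Ef_eq {x s : ℝ} (hs : 0 < s) (hxB : 0 < x + Bf s) :
    Ef x s = -x + Real.log (2*s/(x + Bf s)) - (x - cf s)^2/(4*s) := by
  have h2 : (0:ℝ) < 2*s := by linarith
  have hA : Real.sqrt (2*s) ^ 2 = 2*s := Real.sq_sqrt h2.le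
  have hApos : 0 < Real.sqrt (2*s) := Real.sqrt_pos.mpr h2
  have hU : 0 < Uf x s := div_pos hxB hApos
  -- (a) square term
  have ha : (Uf x s)^2/2 = (x + Bf s)^2/(4*s) := by
    rw [Uf, div_pow, hA]
    ring
  -- (b) main algebra
  have hb : s - (x + Bf s)^2/(4*s) = -x + cf s - (x - cf s)^2/(4*s) := by
    rw [Bf]
    field_simp
    ring
  -- (c) log constants
  have hc : cf s - Real.log (Real.sqrt (2*Real.pi)) = (1/2) * Real.log (2*s) := by
    rw [cf, Real.log_sqrt (by positivity), show (4:ℝ)*Real.pi*s = (2*Real.pi)*(2*s) by ring,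
      Real.log_mul (by positivity) (ne_of_gt h2)]
    ring
  -- (d) log ratio
  have hd : (1/2) * Real.log (2*s) - Real.log (Uf x s) = Real.log (2*s/(x + Bf s)) := by
    have h1 : (1/2) * Real.log (2*s) = Real.log (Real.sqrt (2*s)) := by
      rw [Real.log_sqrt h2.le]; ring
    rw [h1, Uf, Real.log_div (ne_of_gt hxB) (ne_of_gt hApos), Real.log_div (ne_of_gt h2) (ne_of_gt hxB)]
    have h3 : Real.log (2*s) = 2 * Real.log (Real.sqrt (2*s)) := by
      rw [Real.log_sqrt h2.le]; ring
    rw [h3]; ring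
  rw [Ef, ha, show s - (x + Bf s)^2/(4*s) - Real.log (Real.sqrt (2*Real.pi)) - Real.log (Uf x s)
      = (s - (x + Bf s)^2/(4*s) - cf s) + (cf s - Real.log (Real.sqrt (2*Real.pi))) - Real.log (Uf x s) by ring,
    hb, hc]
  rw [show -x + cf s - (x - cf s)^2/(4*s) - cf s + 1/2 * Real.log (2*s) - Real.log (Uf x s)
      = -x - (x - cf s)^2/(4*s) + (1/2 * Real.log (2*s) - Real.log (Uf x s)) by ring, hd]
  ring

lemma tendsto_sq_term (x : ℝ) : Tendsto (fun s => (x - cf s)^2/(4*s)) atTop (𝓝 0) := by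
  have hinner : Tendsto (fun s => (x - cf s)/(2*Real.sqrt s)) atTop (𝓝 0) := by
    have h1 : Tendsto (fun s : ℝ => x * (2*Real.sqrt s)⁻¹ - (cf s / Real.sqrt s)/2) atTop (𝓝 0) := by
      have ha : Tendsto (fun s : ℝ => (2*Real.sqrt s)⁻¹) atTop (𝓝 0) :=
        tendsto_inv_atTop_zero.comp (tendsto_sqrt_atTop'.const_mul_atTop two_pos)
      have := (ha.const_mul x).sub (tendsto_cf_div_sqrt.div_const 2)
      simpa using this
    apply h1.congr'
    filter_upwards [eventually_gt_atTop (0:ℝ)] with s hs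
    have hss : Real.sqrt s ≠ 0 := ne_of_gt (Real.sqrt_pos.mpr hs)
    field_simp
  have := hinner.pow 2
  rw [show (0:ℝ)^2 = 0 by ring] at this
  apply this.congr'
  filter_upwards [eventually_gt_atTop (0:ℝ)] with s hs
  have hss : (0:ℝ) < Real.sqrt s := Real.sqrt_pos.mpr hs
  have hsq : Real.sqrt s ^ 2 = s := Real.sq_sqrt hs.le
  rw [div_pow, mul_pow, hsq]
  norm_num

lemma tendsto_log_ratio (x : ℝ) : Tendsto (fun s => Real.log (2*s/(x + Bf s))) atTop (𝓝 0) := by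
  have hr : Tendsto (fun s => 2*s/(x + Bf s)) atTop (𝓝 1) := by
    have h1 := (tendsto_ratio x).inv₀ one_ne_zero
    rw [inv_one] at h1
    apply h1.congr'
    filter_upwards [eventually_gt_atTop (0:ℝ), tendsto_Bf_atTop.eventually_gt_atTop (-x)]
      with s hs hBf
    have hxB : 0 < x + Bf s := by linarith
    rw [inv_div]
  have := (Real.continuousAt_log one_ne_zero).tendsto.comp hr
  simpa [Real.log_one, Function.comp_def] using this

lemma tendsto_Ef (x : ℝ) : Tendsto (Ef x) atTop (𝓝 (-x)) := by
  have h := ((tendsto_log_ratio x).sub (tendsto_sq_term x)).const_add (-x)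
  rw [show -x + (0 - 0) = -x by ring] at h
  apply h.congr'
  filter_upwards [eventually_gt_atTop (0:ℝ), tendsto_Bf_atTop.eventually_gt_atTop (-x)]
    with s hs hBf
  rw [Ef_eq hs (show 0 < x + Bf s by linarith)]
  ring

lemma key_g (x : ℝ) :
    Tendsto (fun s => Real.exp s * (phiN (Uf x s) / Uf x s)) atTop (𝓝 (Real.exp (-x))) := by
  have h := (Real.continuous_exp.tendsto _).comp (tendsto_Ef x)
  apply h.congr'
  filter_upwards [(tendsto_Uf_atTop x).eventually_gt_atTop 0] with s hU
  have hsq : (0:ℝ) < Real.sqrt (2*Real.pi) := Real.sqrt_pos.mpr (by positivity)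
  simp only [Function.comp]
  rw [Ef, sub_eq_add_neg, sub_eq_add_neg, sub_eq_add_neg, Real.exp_add, Real.exp_add,
    Real.exp_add, Real.exp_neg, Real.exp_neg, Real.exp_neg, Real.exp_log hU, Real.exp_log hsq, phiN]
  rw [neg_div, Real.exp_neg]
  field_simp

lemma key_T (x : ℝ) :
    Tendsto (fun s => Real.exp s * TN (Uf x s)) atTop (𝓝 (Real.exp (-x))) := by
  have hup := key_g x
  have hlow : Tendsto (fun s => (Real.exp s * (phiN (Uf x s) / Uf x s)) * (1 - ((Uf x s)⁻¹)^2))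
      atTop (𝓝 (Real.exp (-x))) := by
    have hUinv : Tendsto (fun s => (Uf x s)⁻¹) atTop (𝓝 0) :=
      tendsto_inv_atTop_zero.comp (tendsto_Uf_atTop x)
    have h1 : Tendsto (fun s => 1 - ((Uf x s)⁻¹)^2) atTop (𝓝 1) := by
      have := (hUinv.pow 2).const_sub 1
      simpa using this
    have := hup.mul h1
    simpa using this
  apply tendsto_of_tendsto_of_tendsto_of_le_of_le' hlow hup
  · filter_upwards [(tendsto_Uf_atTop x).eventually_ge_atTop 2] with s hU2
    have hU : 0 < Uf x s := lt_of_lt_of_le two_pos hU2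
    have h := mills_lower hU2
    have heq : (Real.exp s * (phiN (Uf x s) / Uf x s)) * (1 - ((Uf x s)⁻¹)^2)
        = Real.exp s * (((Uf x s)⁻¹ - ((Uf x s)⁻¹)^3) * phiN (Uf x s)) := by
      field_simp
    rw [heq]
    exact mul_le_mul_of_nonneg_left h (Real.exp_pos s).le
  · filter_upwards [(tendsto_Uf_atTop x).eventually_gt_atTop 0] with s hU
    exact mul_le_mul_of_nonneg_left (mills_upper hU) (Real.exp_pos s).le

lemma key_nat (x : ℝ) :
    Tendsto (fun n : ℕ => (n:ℝ) * TN (Uf x (Real.log n))) atTop (𝓝 (Real.exp (-x))) := by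
  have hlogn : Tendsto (fun n : ℕ => Real.log n) atTop atTop :=
    Real.tendsto_log_atTop.comp tendsto_natCast_atTop_atTop
  have h := (key_T x).comp hlogn
  apply h.congr'
  filter_upwards [eventually_ge_atTop 1] with n hn
  have : Real.exp (Real.log n) = n :=
    Real.exp_log (by exact_mod_cast Nat.pos_of_ne_zero (by omega))
  simp only [Function.comp]
  rw [this]


lemma tendsto_slope_log_one_sub :
    Tendsto (fun t : ℝ => Real.log (1 - t) / t) (𝓝[≠] 0) (𝓝 (-1)) := by
  have hd : HasDerivAt (fun t : ℝ => Real.log (1 - t)) (-1) 0 := by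
    have h1 : HasDerivAt (fun t : ℝ => 1 - t) (-1) 0 := by
      simpa using (hasDerivAt_id (0:ℝ)).const_sub 1
    have := h1.log (by norm_num)
    simpa using this
  have := hasDerivAt_iff_tendsto_slope.mp hd
  apply this.congr'
  filter_upwards [self_mem_nhdsWithin] with t ht
  simp only [Set.mem_compl_iff, Set.mem_singleton_iff] at ht
  rw [slope_def_field]
  simp [div_eq_div_iff]

lemma tendsto_one_sub_pow {c : ℝ} {s : ℕ → ℝ}
    (h : Tendsto (fun n : ℕ => (n:ℝ) * s n) atTop (𝓝 c)) :
    Tendsto (fun n : ℕ => (1 - s n)^n) atTop (𝓝 (Real.exp (-c))) := by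
  -- s n → 0
  have hs0 : Tendsto s atTop (𝓝 0) := by
    have hinv : Tendsto (fun n : ℕ => ((n:ℝ))⁻¹) atTop (𝓝 0) :=
      tendsto_inv_atTop_zero.comp tendsto_natCast_atTop_atTop
    have := h.mul hinv
    rw [mul_zero] at this
    apply this.congr'
    filter_upwards [eventually_ge_atTop 1] with n hn
    have hn0 : (n:ℝ) ≠ 0 := by exact_mod_cast Nat.pos_of_ne_zero (by omega) |>.ne'
    field_simp
  -- extended slope function
  set r : ℝ → ℝ := fun t => if t = 0 then -1 else Real.log (1 - t) / t with hr
  have hrt : Tendsto r (𝓝 0) (𝓝 (-1)) := by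
    rw [← nhdsNE_sup_pure (0:ℝ)]
    rw [tendsto_sup]
    constructor
    · apply tendsto_slope_log_one_sub.congr'
      filter_upwards [self_mem_nhdsWithin] with t ht
      simp only [Set.mem_compl_iff, Set.mem_singleton_iff] at ht
      rw [hr]; simp [ht]
    · rw [tendsto_pure_left]
      intro U hU
      simp only [hr, if_pos rfl]
      exact mem_of_mem_nhds hU
  -- n * log (1 - s n) → -c
  have hkey : Tendsto (fun n : ℕ => (n:ℝ) * Real.log (1 - s n)) atTop (𝓝 (-c)) := by
    have hcomp := hrt.comp hs0
    have := h.mul hcomp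
    rw [show c * (-1) = -c by ring] at this
    apply this.congr
    intro n
    simp only [Function.comp, hr]
    by_cases hsn : s n = 0
    · simp [hsn]
    · rw [if_neg hsn]
      field_simp
  -- conclude
  have hexp := (Real.continuous_exp.tendsto _).comp hkey
  apply hexp.congr'
  filter_upwards [hs0.eventually_lt_const one_pos] with n hlt
  have hpos : 0 < 1 - s n := by linarith
  simp only [Function.comp]
  rw [← Real.log_pow, Real.exp_log (pow_pos hpos n)]


lemma gaussian_singleton (t : ℝ) : (gaussianReal 0 1) {t} = 0 :=
  (gaussianReal_absolutelyContinuous 0 one_ne_zero) Real.volume_singleton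

lemma gaussian_map_neg : (gaussianReal 0 1).map (fun x : ℝ => -x) = gaussianReal 0 1 := by
  have h := gaussianReal_map_const_mul (μ := 0) (v := 1) (-1)
  have h2 : (NNReal.mk ((-1:ℝ)^2) (sq_nonneg _)) * 1 = 1 := by
    ext; norm_num
  rw [h2] at h
  simp only [mul_zero] at h
  rw [← h]
  congr 1
  ext x
  ring

lemma gaussian_Ici (t : ℝ) : (gaussianReal 0 1) (Set.Ici t) = (gaussianReal 0 1) (Set.Ioi t) := by
  apply le_antisymm
  · rw [show Set.Ici t = {t} ∪ Set.Ioi t by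
      ext x; simp [le_iff_lt_or_eq, eq_comm, or_comm]]
    calc (gaussianReal 0 1) ({t} ∪ Set.Ioi t) ≤ (gaussianReal 0 1) {t} + (gaussianReal 0 1) (Set.Ioi t) :=
          measure_union_le _ _
    _ = (gaussianReal 0 1) (Set.Ioi t) := by rw [gaussian_singleton]; ring
  · exact measure_mono Set.Ioi_subset_Ici_self

lemma PhiN_neg (t : ℝ) : PhiN (-t) = TN t := by
  have hmap : (gaussianReal 0 1) (Set.Iic (-t)) = (gaussianReal 0 1) (Set.Ici t) := by
    conv_lhs => rw [← gaussian_map_neg]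
    rw [Measure.map_apply measurable_neg measurableSet_Iic]
    congr 1
    ext x
    simp [neg_le]
  rw [PhiN, TN, hmap, gaussian_Ici]

lemma PhiN_add_TN (t : ℝ) : PhiN t + TN t = 1 := by
  have h := measure_add_measure_compl (μ := gaussianReal 0 1) (measurableSet_Iic (a := t))
  rw [Set.compl_Iic, measure_univ] at h
  rw [PhiN, TN, ← ENNReal.toReal_add (measure_ne_top _ _) (measure_ne_top _ _), h]
  rfl

lemma PhiN_sub_PhiN {w u : ℝ} (h : w ≤ u) :
    ((gaussianReal 0 1) (Set.Ioc w u)).toReal = PhiN u - PhiN w := by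
  have hdisj : Disjoint (Set.Iic w) (Set.Ioc w u) := by
    apply Set.disjoint_left.mpr
    intro x hx hx2
    exact absurd hx2.1 (not_lt.mpr hx)
  have hunion : Set.Iic w ∪ Set.Ioc w u = Set.Iic u := Set.Iic_union_Ioc_eq_Iic h
  have := measure_union (μ := gaussianReal 0 1) hdisj measurableSet_Ioc
  rw [hunion] at this
  have h2 := congrArg ENNReal.toReal this
  rw [ENNReal.toReal_add (measure_ne_top _ _) (measure_ne_top _ _)] at h2
  rw [PhiN, PhiN]
  linarith

-- independence
lemma meas_iInter_preimage {Ω : Type*} [MeasurableSpace Ω] {P : Measure Ω} [IsProbabilityMeasure P]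
    {Z : ℕ → Ω → ℝ} (hmeas : ∀ i, Measurable (Z i))
    (hindep : iIndepFun Z P)
    (hdist : ∀ i, Measure.map (Z i) P = gaussianReal 0 1)
    (n : ℕ) {S : Set ℝ} (hS : MeasurableSet S) :
    P (⋂ j : Fin n, Z (j:ℕ) ⁻¹' S) = ((gaussianReal 0 1) S)^n := by
  have h1 : ⋂ j : Fin n, Z (j:ℕ) ⁻¹' S = ⋂ i ∈ Finset.range n, Z i ⁻¹' S := by
    ext ω
    simp only [Set.mem_iInter, Finset.mem_range]
    exact ⟨fun h i hi => h ⟨i, hi⟩, fun h j => h j j.2⟩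
  rw [h1, hindep.meas_biInter (fun i _ => ⟨S, hS, rfl⟩)]
  have h2 : ∀ i, P (Z i ⁻¹' S) = (gaussianReal 0 1) S := by
    intro i
    rw [← hdist i, Measure.map_apply (hmeas i) hS]
  simp only [h2]
  rw [Finset.prod_const, Finset.card_range]


noncomputable def pairMap {Ω : Type*} (Z : ℕ → Ω → ℝ) (n : ℕ) (ω : Ω) : ℝ × ℝ :=
  (Real.sqrt (2 * Real.log n) * orderStat (fun j : Fin n => Z j ω) n
     - 2 * Real.log n + (1 / 2) * Real.log (4 * Real.pi * Real.log n),
   Real.sqrt (2 * Real.log n) * orderStat (fun j : Fin n => Z j ω) 1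
     + 2 * Real.log n - (1 / 2) * Real.log (4 * Real.pi * Real.log n))

lemma neg_Uf_eq (y s : ℝ) : -(Uf (-y) s) = (y - Bf s) / Real.sqrt (2*s) := by
  rw [Uf, ← neg_div]
  ring_nf

lemma pair_preimage {Ω : Type*} (Z : ℕ → Ω → ℝ) {n : ℕ} (hn : 2 ≤ n) (x y : ℝ) :
    pairMap Z n ⁻¹' (Set.Iic x ×ˢ Set.Iic y)
      = (⋂ j : Fin n, Z (j:ℕ) ⁻¹' Set.Iic (Uf x (Real.log n)))
        \ (⋂ j : Fin n, Z (j:ℕ) ⁻¹' Set.Ioc (-(Uf (-y) (Real.log n))) (Uf x (Real.log n))) := by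
  have hs : 0 < Real.log n := Real.log_pos (by exact_mod_cast Nat.lt_of_lt_of_le one_lt_two hn)
  have hA : 0 < Real.sqrt (2 * Real.log n) := Real.sqrt_pos.mpr (by linarith)
  have hn0 : 0 < n := by omega
  have hcomm : ∀ a : ℝ, a * Real.sqrt (2 * Real.log n) = Real.sqrt (2 * Real.log n) * a :=
    fun a => mul_comm _ _
  ext ω
  simp only [Set.mem_preimage, pairMap, Set.mem_prod, Set.mem_Iic, Set.mem_diff,
    Set.mem_iInter, Set.mem_Ioc]
  constructor
  · rintro ⟨hMx, hmy⟩
    have hord : orderStat (fun j : Fin n => Z j ω) n ≤ Uf x (Real.log n) := by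
      rw [Uf, le_div_iff₀ hA, Bf, cf, hcomm]
      linarith
    have h1 := (orderStat_max_le_iff hn0 _ _).mp hord
    refine ⟨fun j => h1 j, ?_⟩
    intro hall
    have h3 := (lt_orderStat_min_iff hn0 (fun j : Fin n => Z j ω) _).mpr (fun j => (hall j).1)
    have h4 : orderStat (fun j : Fin n => Z j ω) 1 ≤ -(Uf (-y) (Real.log n)) := by
      rw [neg_Uf_eq, le_div_iff₀ hA, Bf, cf, hcomm]
      linarith
    linarith
  · rintro ⟨hall, hnot⟩
    have hordn := (orderStat_max_le_iff hn0 (fun j : Fin n => Z j ω) _).mpr hall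
    rw [Uf, le_div_iff₀ hA, Bf, cf, hcomm] at hordn
    refine ⟨by linarith, ?_⟩
    push_neg at hnot
    obtain ⟨j, hj⟩ := hnot
    have hZj : Z (j:ℕ) ω ≤ -(Uf (-y) (Real.log n)) := by
      by_contra hc
      push_neg at hc
      exact absurd (hj hc) (not_lt.mpr (hall j))
    have h5 : orderStat (fun j : Fin n => Z j ω) 1 ≤ -(Uf (-y) (Real.log n)) :=
      le_trans (orderStat_min_le hn0 _ j) hZj
    rw [neg_Uf_eq, le_div_iff₀ hA, Bf, cf, hcomm] at h5
    linarith


section ctx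
variable {Ω : Type*} [MeasurableSpace Ω] {P : Measure Ω} [IsProbabilityMeasure P]
    {Z : ℕ → Ω → ℝ}

lemma Hn_eq (hmeas : ∀ i, Measurable (Z i))
    (hindep : iIndepFun Z P)
    (hdist : ∀ i, Measure.map (Z i) P = gaussianReal 0 1)
    {n : ℕ} (hn : 2 ≤ n) {x y : ℝ}
    (hwu : -(Uf (-y) (Real.log n)) ≤ Uf x (Real.log n)) :
    (P ((⋂ j : Fin n, Z (j:ℕ) ⁻¹' Set.Iic (Uf x (Real.log n)))
        \ (⋂ j : Fin n, Z (j:ℕ) ⁻¹' Set.Ioc (-(Uf (-y) (Real.log n))) (Uf x (Real.log n))))).toReal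
      = PhiN (Uf x (Real.log n))^n
        - (PhiN (Uf x (Real.log n)) - PhiN (-(Uf (-y) (Real.log n))))^n := by
  set u := Uf x (Real.log n)
  set w := -(Uf (-y) (Real.log n))
  have hsub : (⋂ j : Fin n, Z (j:ℕ) ⁻¹' Set.Ioc w u) ⊆ ⋂ j : Fin n, Z (j:ℕ) ⁻¹' Set.Iic u :=
    Set.iInter_mono fun j => Set.preimage_mono Set.Ioc_subset_Iic_self
  have hmB : MeasurableSet (⋂ j : Fin n, Z (j:ℕ) ⁻¹' Set.Ioc w u) :=
    MeasurableSet.iInter fun j => (hmeas j) measurableSet_Ioc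
  rw [measure_diff hsub hmB.nullMeasurableSet (measure_ne_top _ _)]
  rw [ENNReal.toReal_sub_of_le (measure_mono hsub) (measure_ne_top _ _)]
  rw [meas_iInter_preimage hmeas hindep hdist n measurableSet_Iic,
    meas_iInter_preimage hmeas hindep hdist n measurableSet_Ioc,
    ENNReal.toReal_pow, ENNReal.toReal_pow, PhiN_sub_PhiN hwu]
  rfl

lemma cdf_tendsto (hmeas : ∀ i, Measurable (Z i))
    (hindep : iIndepFun Z P)
    (hdist : ∀ i, Measure.map (Z i) P = gaussianReal 0 1)
    (x y : ℝ) :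
    Tendsto (fun n : ℕ =>
        (P ((⋂ j : Fin n, Z (j:ℕ) ⁻¹' Set.Iic (Uf x (Real.log n)))
          \ (⋂ j : Fin n, Z (j:ℕ) ⁻¹' Set.Ioc (-(Uf (-y) (Real.log n))) (Uf x (Real.log n))))).toReal)
      atTop (𝓝 (Real.exp (-(Real.exp (-x))) - Real.exp (-(Real.exp (-x) + Real.exp y)))) := by
  have hlogn : Tendsto (fun n : ℕ => Real.log n) atTop atTop :=
    Real.tendsto_log_atTop.comp tendsto_natCast_atTop_atTop
  have hu : Tendsto (fun n : ℕ => Uf x (Real.log n)) atTop atTop :=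
    (tendsto_Uf_atTop x).comp hlogn
  have hu' : Tendsto (fun n : ℕ => Uf (-y) (Real.log n)) atTop atTop :=
    (tendsto_Uf_atTop (-y)).comp hlogn
  -- first limit
  have h1 : Tendsto (fun n : ℕ => PhiN (Uf x (Real.log n))^n) atTop
      (𝓝 (Real.exp (-(Real.exp (-x))))) := by
    have := tendsto_one_sub_pow (key_nat x)
    apply this.congr
    intro n
    congr 1
    have := PhiN_add_TN (Uf x (Real.log n))
    linarith
  -- second limit
  have h2 : Tendsto (fun n : ℕ =>
      (PhiN (Uf x (Real.log n)) - PhiN (-(Uf (-y) (Real.log n))))^n) atTop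
      (𝓝 (Real.exp (-(Real.exp (-x) + Real.exp y)))) := by
    have hsum : Tendsto (fun n : ℕ =>
        (n:ℝ) * (TN (Uf x (Real.log n)) + TN (Uf (-y) (Real.log n)))) atTop
        (𝓝 (Real.exp (-x) + Real.exp y)) := by
      have hy := key_nat (-y)
      rw [neg_neg] at hy
      have := (key_nat x).add hy
      apply this.congr
      intro n
      ring
    have := tendsto_one_sub_pow hsum
    apply this.congr
    intro n
    congr 1
    rw [PhiN_neg]
    have := PhiN_add_TN (Uf x (Real.log n))
    linarith
  have hdiff := h1.sub h2
  apply hdiff.congr'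
  filter_upwards [eventually_ge_atTop 2, hu.eventually_ge_atTop 0, hu'.eventually_ge_atTop 0]
    with n hn hu0 hu'0
  exact (Hn_eq hmeas hindep hdist hn (by linarith)).symm
end ctx


-- limit measure CDF values
lemma G_Iio {G : Measure ℝ} [IsProbabilityMeasure G]
    (hGcdf : ∀ z : ℝ, G (Set.Iic z) = ENNReal.ofReal (Real.exp (-Real.exp (-z)))) (z : ℝ) :
    G (Set.Iio z) = ENNReal.ofReal (Real.exp (-Real.exp (-z))) := by
  have hunion : (⋃ n : ℕ, Set.Iic (z - 1/(n+1))) = Set.Iio z := by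
    ext t
    simp only [Set.mem_iUnion, Set.mem_Iic, Set.mem_Iio]
    constructor
    · rintro ⟨n, hn⟩
      have : (0:ℝ) < 1/(n+1) := by positivity
      linarith
    · intro ht
      obtain ⟨n, hn⟩ := exists_nat_one_div_lt (show (0:ℝ) < z - t by linarith)
      exact ⟨n, by push_cast at hn ⊢; linarith⟩
  have hmono : Monotone (fun n : ℕ => Set.Iic (z - 1/(n+1))) := by
    intro m n hmn
    apply Set.Iic_subset_Iic.mpr
    have h1 : (1:ℝ)/(n+1) ≤ 1/(m+1) := by
      apply one_div_le_one_div_of_le (by positivity)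
      have := (Nat.cast_le (α := ℝ)).mpr hmn
      linarith
    linarith
  have h1 := tendsto_measure_iUnion_atTop (μ := G) hmono
  rw [hunion] at h1
  have h2 : Tendsto (fun n : ℕ => G (Set.Iic (z - 1/(n+1)))) atTop
      (𝓝 (ENNReal.ofReal (Real.exp (-Real.exp (-z))))) := by
    simp only [hGcdf]
    apply Tendsto.comp (ENNReal.continuous_ofReal.tendsto _)
    apply Tendsto.comp (Real.continuous_exp.tendsto _)
    apply Tendsto.neg
    apply Tendsto.comp (Real.continuous_exp.tendsto _)
    have hz : Tendsto (fun n : ℕ => z - 1/(n+1)) atTop (𝓝 z) := by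
      have := tendsto_one_div_add_atTop_nhds_zero_nat (𝕜 := ℝ)
      have h3 := (tendsto_const_nhds (x := z) (f := atTop (α := ℕ))).sub this
      simpa using h3
    exact hz.neg
  exact tendsto_nhds_unique h1 h2

lemma Glim_Iic {G : Measure ℝ} [IsProbabilityMeasure G]
    (hGcdf : ∀ z : ℝ, G (Set.Iic z) = ENNReal.ofReal (Real.exp (-Real.exp (-z)))) (x y : ℝ) :
    ((G.prod (Measure.map (fun x : ℝ => -x) G)) (Set.Iic x ×ˢ Set.Iic y)).toReal
      = Real.exp (-(Real.exp (-x))) - Real.exp (-(Real.exp (-x) + Real.exp y)) := by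
  have hmapinst : IsProbabilityMeasure (Measure.map (fun x : ℝ => -x) G) :=
    Measure.isProbabilityMeasure_map measurable_neg.aemeasurable
  rw [Measure.prod_prod]
  have hmap : (Measure.map (fun x : ℝ => -x) G) (Set.Iic y) = 1 - ENNReal.ofReal (Real.exp (-Real.exp y)) := by
    rw [Measure.map_apply measurable_neg measurableSet_Iic]
    have hpre : (fun x : ℝ => -x) ⁻¹' Set.Iic y = Set.Ici (-y) := by
      ext t; simp [neg_le]
    rw [hpre, ← Set.compl_Iio, measure_compl measurableSet_Iio (measure_ne_top _ _),
      measure_univ, G_Iio hGcdf, neg_neg]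
  rw [hGcdf, hmap, ENNReal.toReal_mul, ENNReal.toReal_ofReal (Real.exp_pos _).le,
    ENNReal.toReal_sub_of_le (ENNReal.ofReal_le_one.mpr (Real.exp_le_one_iff.mpr (neg_nonpos.mpr (Real.exp_pos y).le))) ENNReal.one_ne_top,
    ENNReal.toReal_one, ENNReal.toReal_ofReal (Real.exp_pos _).le]
  rw [show Real.exp (-(Real.exp (-x) + Real.exp y))
      = Real.exp (-(Real.exp (-x))) * Real.exp (-(Real.exp y)) by
    rw [← Real.exp_add]; ring_nf]
  ring


def IsBox (S : Set (ℝ × ℝ)) : Prop := ∃ a b c d : ℝ, S = Set.Ioc a b ×ˢ Set.Ioc c d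

lemma IsBox.measurableSet {S : Set (ℝ × ℝ)} (h : IsBox S) : MeasurableSet S := by
  obtain ⟨a, b, c, d, rfl⟩ := h
  exact measurableSet_Ioc.prod measurableSet_Ioc

lemma IsBox.inter {S T : Set (ℝ × ℝ)} (hS : IsBox S) (hT : IsBox T) : IsBox (S ∩ T) := by
  obtain ⟨a, b, c, d, rfl⟩ := hS
  obtain ⟨a', b', c', d', rfl⟩ := hT
  exact ⟨a ⊔ a', b ⊓ b', c ⊔ c', d ⊓ d',
    by rw [Set.prod_inter_prod, Set.Ioc_inter_Ioc, Set.Ioc_inter_Ioc]⟩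

lemma isBox_empty : IsBox (∅ : Set (ℝ × ℝ)) :=
  ⟨0, 0, 0, 0, by simp⟩

-- the 4-corner identity
lemma fourCorner (ν : Measure (ℝ × ℝ)) [IsFiniteMeasure ν] {a b c d : ℝ}
    (hab : a ≤ b) (hcd : c ≤ d) :
    (ν (Set.Ioc a b ×ˢ Set.Ioc c d)).toReal
      = (ν (Set.Iic b ×ˢ Set.Iic d)).toReal - (ν (Set.Iic a ×ˢ Set.Iic d)).toReal
        - (ν (Set.Iic b ×ˢ Set.Iic c)).toReal + (ν (Set.Iic a ×ˢ Set.Iic c)).toReal := by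
  set E := Set.Iic b ×ˢ Set.Iic d with hE
  set E1 := Set.Iic a ×ˢ Set.Iic d with hE1
  set E2 := Set.Iic b ×ˢ Set.Iic c with hE2
  have hset : Set.Ioc a b ×ˢ Set.Ioc c d = E \ (E1 ∪ E2) := by
    ext ⟨p, q⟩
    simp only [hE, hE1, hE2, Set.mem_prod, Set.mem_Ioc, Set.mem_Iic, Set.mem_diff,
      Set.mem_union, not_or, not_and, not_le]
    constructor
    · rintro ⟨⟨hap, hpb⟩, hcq, hqd⟩
      exact ⟨⟨hpb, hqd⟩, fun hpa => absurd (hap.trans_le hpa) (lt_irrefl a),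
        fun _ => hcq⟩
    · rintro ⟨⟨hpb, hqd⟩, h1, h2⟩
      refine ⟨⟨?_, hpb⟩, h2 hpb, hqd⟩
      by_contra hpa
      push_neg at hpa
      exact absurd hqd (not_le.mpr (h1 hpa))
  have hsubs : E1 ∪ E2 ⊆ E := by
    apply Set.union_subset
    · exact Set.prod_mono (Set.Iic_subset_Iic.mpr hab) subset_rfl
    · exact Set.prod_mono subset_rfl (Set.Iic_subset_Iic.mpr hcd)
  have hmE1 : MeasurableSet E1 := measurableSet_Iic.prod measurableSet_Iic
  have hmE2 : MeasurableSet E2 := measurableSet_Iic.prod measurableSet_Iic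
  have hinter : E1 ∩ E2 = Set.Iic a ×ˢ Set.Iic c := by
    rw [hE1, hE2, Set.prod_inter_prod, Set.Iic_inter_Iic, Set.Iic_inter_Iic,
      inf_eq_left.mpr hab, inf_eq_right.mpr hcd]
  have hkey := measure_union_add_inter (μ := ν) E1 hmE2
  rw [hinter] at hkey
  have hkey2 := congrArg ENNReal.toReal hkey
  rw [ENNReal.toReal_add (measure_ne_top _ _) (measure_ne_top _ _),
    ENNReal.toReal_add (measure_ne_top _ _) (measure_ne_top _ _)] at hkey2
  have hdiff : (ν (E \ (E1 ∪ E2))).toReal = (ν E).toReal - (ν (E1 ∪ E2)).toReal := by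
    rw [measure_diff hsubs (hmE1.union hmE2).nullMeasurableSet (measure_ne_top _ _),
      ENNReal.toReal_sub_of_le (measure_mono hsubs) (measure_ne_top _ _)]
  rw [hset, hdiff]
  linarith

section generic
variable {μ : Measure (ℝ × ℝ)} [IsProbabilityMeasure μ]
  {μs : ℕ → Measure (ℝ × ℝ)} [∀ n, IsProbabilityMeasure (μs n)]

lemma box_tendsto_of_cdf_tendsto
    (hcdf : ∀ x y : ℝ, Tendsto (fun n => (μs n (Set.Iic x ×ˢ Set.Iic y)).toReal) atTop
      (𝓝 ((μ (Set.Iic x ×ˢ Set.Iic y)).toReal)))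
    {S : Set (ℝ × ℝ)} (hS : IsBox S) :
    Tendsto (fun n => (μs n S).toReal) atTop (𝓝 ((μ S).toReal)) := by
  obtain ⟨a, b, c, d, rfl⟩ := hS
  rcases le_or_gt a b with hab | hab
  · rcases le_or_gt c d with hcd | hcd
    · have h := (((hcdf b d).sub (hcdf a d)).sub (hcdf b c)).add (hcdf a c)
      rw [← fourCorner μ hab hcd] at h
      apply h.congr
      intro n
      rw [← fourCorner (μs n) hab hcd]
    · have hempty : Set.Ioc a b ×ˢ Set.Ioc c d = ∅ := by
        rw [Set.Ioc_eq_empty (not_lt.mpr hcd.le), Set.prod_empty]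
      rw [hempty]
      simp
  · have hempty : Set.Ioc a b ×ˢ Set.Ioc c d = ∅ := by
      rw [Set.Ioc_eq_empty (not_lt.mpr hab.le), Set.empty_prod]
    rw [hempty]
    simp

-- finite unions
def UB (l : List (Set (ℝ × ℝ))) : Set (ℝ × ℝ) := l.foldr (· ∪ ·) ∅

lemma mem_UB {z : ℝ × ℝ} {l : List (Set (ℝ × ℝ))} : z ∈ UB l ↔ ∃ s ∈ l, z ∈ s := by
  induction l with
  | nil => simp [UB]
  | cons head tail ih =>
    show z ∈ head ∪ UB tail ↔ _
    simp [Set.mem_union, ih]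

lemma UB_measurableSet {l : List (Set (ℝ × ℝ))} (h : ∀ s ∈ l, IsBox s) :
    MeasurableSet (UB l) := by
  induction l with
  | nil => simpa [UB] using MeasurableSet.empty
  | cons head tail ih =>
    exact ((h head (by simp)).measurableSet).union (ih fun s hs => h s (by simp [hs]))

lemma inter_UB (S : Set (ℝ × ℝ)) (l : List (Set (ℝ × ℝ))) :
    S ∩ UB l = UB (l.map (fun t => S ∩ t)) := by
  induction l with
  | nil => simp [UB]
  | cons head tail ih =>
    show S ∩ (head ∪ UB tail) = (S ∩ head) ∪ UB (tail.map _)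
    rw [Set.inter_union_distrib_left, ih]

lemma union_toReal (ν : Measure (ℝ × ℝ)) [IsFiniteMeasure ν] {S T : Set (ℝ × ℝ)}
    (hT : MeasurableSet T) :
    (ν (S ∪ T)).toReal = (ν S).toReal + (ν T).toReal - (ν (S ∩ T)).toReal := by
  have h := measure_union_add_inter (μ := ν) S hT
  have h2 := congrArg ENNReal.toReal h
  rw [ENNReal.toReal_add (measure_ne_top _ _) (measure_ne_top _ _),
    ENNReal.toReal_add (measure_ne_top _ _) (measure_ne_top _ _)] at h2
  linarith

lemma UB_tendsto
    (hcdf : ∀ x y : ℝ, Tendsto (fun n => (μs n (Set.Iic x ×ˢ Set.Iic y)).toReal) atTop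
      (𝓝 ((μ (Set.Iic x ×ˢ Set.Iic y)).toReal))) :
    ∀ (N : ℕ) (l : List (Set (ℝ × ℝ))), l.length ≤ N → (∀ s ∈ l, IsBox s) →
      Tendsto (fun n => (μs n (UB l)).toReal) atTop (𝓝 ((μ (UB l)).toReal)) := by
  intro N
  induction N with
  | zero =>
    intro l hlen _
    rw [List.length_eq_zero_iff.mp (Nat.le_zero.mp hlen)]
    simp only [UB, List.foldr_nil]
    simp
  | succ N ih =>
    intro l hlen hboxes
    match l with
    | [] =>
      simp only [UB, List.foldr_nil]
      simp
    | S :: t =>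
      have hS : IsBox S := hboxes S (by simp)
      have ht : ∀ s ∈ t, IsBox s := fun s hs => hboxes s (by simp [hs])
      have htlen : t.length ≤ N := by simpa using Nat.succ_le_succ_iff.mp hlen
      have hmap : ∀ s ∈ t.map (fun u => S ∩ u), IsBox s := by
        intro s hs
        rw [List.mem_map] at hs
        obtain ⟨u, hu, rfl⟩ := hs
        exact hS.inter (ht u hu)
      have hmaplen : (t.map (fun u => S ∩ u)).length ≤ N := by simpa using htlen
      have h1 := box_tendsto_of_cdf_tendsto hcdf hS
      have h2 := ih t htlen ht
      have h3 := ih _ hmaplen hmap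
      rw [← inter_UB] at h3
      have hcomb := (h1.add h2).sub h3
      have hUBt : MeasurableSet (UB t) := UB_measurableSet ht
      show Tendsto (fun n => (μs n (S ∪ UB t)).toReal) atTop (𝓝 ((μ (S ∪ UB t)).toReal))
      rw [union_toReal μ hUBt]
      apply hcomb.congr
      intro n
      rw [union_toReal (μs n) hUBt]
end generic


def ratBox (q : ℚ × ℚ × ℚ × ℚ) : Set (ℝ × ℝ) :=
  Set.Ioc (q.1 : ℝ) (q.2.1 : ℝ) ×ˢ Set.Ioc (q.2.2.1 : ℝ) (q.2.2.2 : ℝ)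

lemma isBox_ratBox (q : ℚ × ℚ × ℚ × ℚ) : IsBox (ratBox q) :=
  ⟨_, _, _, _, rfl⟩

lemma exists_ratIoc_subset {u : Set ℝ} (hu : IsOpen u) {p : ℝ} (hp : p ∈ u) :
    ∃ a b : ℚ, p ∈ Set.Ioc (a:ℝ) (b:ℝ) ∧ Set.Ioc (a:ℝ) (b:ℝ) ⊆ u := by
  obtain ⟨⟨a, b⟩, ⟨ha, hb⟩, hIoo⟩ := (nhds_basis_Ioo p).mem_iff.mp (hu.mem_nhds hp)
  obtain ⟨a', ha1, ha2⟩ := exists_rat_btwn ha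
  obtain ⟨b', hb1, hb2⟩ := exists_rat_btwn hb
  refine ⟨a', b', ⟨ha2, hb1.le⟩, fun x hx => hIoo ⟨ha1.trans hx.1, lt_of_le_of_lt hx.2 hb2⟩⟩

lemma open_eq_iUnion_boxes {U : Set (ℝ × ℝ)} (hU : IsOpen U) :
    ∃ B : ℕ → Set (ℝ × ℝ), (∀ k, IsBox (B k)) ∧ (∀ k, B k ⊆ U) ∧ (⋃ k, B k) = U := by
  classical
  obtain ⟨e, he⟩ := exists_surjective_nat (ℚ × ℚ × ℚ × ℚ)
  refine ⟨fun k => if ratBox (e k) ⊆ U then ratBox (e k) else ∅, ?_, ?_, ?_⟩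
  · intro k
    show IsBox (if ratBox (e k) ⊆ U then ratBox (e k) else ∅)
    by_cases h : ratBox (e k) ⊆ U
    · rw [if_pos h]; exact isBox_ratBox _
    · rw [if_neg h]; exact isBox_empty
  · intro k
    show (if ratBox (e k) ⊆ U then ratBox (e k) else ∅) ⊆ U
    by_cases h : ratBox (e k) ⊆ U
    · rw [if_pos h]; exact h
    · rw [if_neg h]; exact Set.empty_subset _
  · apply Set.Subset.antisymm
    · apply Set.iUnion_subset
      intro k
      show (if ratBox (e k) ⊆ U then ratBox (e k) else ∅) ⊆ U
      by_cases h : ratBox (e k) ⊆ U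
      · rw [if_pos h]; exact h
      · rw [if_neg h]; exact Set.empty_subset _
    · rintro ⟨p, q⟩ hz
      obtain ⟨u, v, hu, hv, hpu, hqv, huv⟩ := isOpen_prod_iff.mp hU p q hz
      obtain ⟨a, b, hpab, hab⟩ := exists_ratIoc_subset hu hpu
      obtain ⟨c, d, hqcd, hcd⟩ := exists_ratIoc_subset hv hqv
      obtain ⟨k, hk⟩ := he (a, b, c, d)
      have hsub : ratBox (a, b, c, d) ⊆ U := by
        rintro ⟨p', q'⟩ ⟨hp', hq'⟩
        exact huv ⟨hab hp', hcd hq'⟩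
      refine Set.mem_iUnion.mpr ⟨k, ?_⟩
      show (p, q) ∈ if ratBox (e k) ⊆ U then ratBox (e k) else ∅
      rw [hk, if_pos hsub]
      exact ⟨hpab, hqcd⟩

section generic
variable {μ : Measure (ℝ × ℝ)} [IsProbabilityMeasure μ]
  {μs : ℕ → Measure (ℝ × ℝ)} [∀ n, IsProbabilityMeasure (μs n)]

lemma le_liminf_open
    (hcdf : ∀ x y : ℝ, Tendsto (fun n => (μs n (Set.Iic x ×ˢ Set.Iic y)).toReal) atTop
      (𝓝 ((μ (Set.Iic x ×ˢ Set.Iic y)).toReal)))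
    {U : Set (ℝ × ℝ)} (hU : IsOpen U) :
    μ U ≤ atTop.liminf (fun n => μs n U) := by
  obtain ⟨B, hbox, hsub, hunion⟩ := open_eq_iUnion_boxes hU
  set S : ℕ → Set (ℝ × ℝ) := fun m => UB ((List.range m).map B) with hSdef
  have hS_boxes : ∀ m, ∀ s ∈ (List.range m).map B, IsBox s := by
    intro m s hs
    rw [List.mem_map] at hs
    obtain ⟨k, _, rfl⟩ := hs
    exact hbox k
  have hS_sub : ∀ m, S m ⊆ U := by
    intro m z hz
    obtain ⟨s, hs, hzs⟩ := mem_UB.mp hz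
    rw [List.mem_map] at hs
    obtain ⟨k, _, rfl⟩ := hs
    exact hsub k hzs
  have hS_mono : Monotone S := by
    intro m m' hmm z hz
    obtain ⟨s, hs, hzs⟩ := mem_UB.mp hz
    rw [List.mem_map] at hs
    obtain ⟨k, hk, rfl⟩ := hs
    rw [List.mem_range] at hk
    exact mem_UB.mpr ⟨B k, List.mem_map.mpr ⟨k, List.mem_range.mpr (by omega), rfl⟩, hzs⟩
  have hS_union : (⋃ m, S m) = U := by
    apply Set.Subset.antisymm
    · exact Set.iUnion_subset hS_sub
    · rw [← hunion]
      apply Set.iUnion_subset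
      intro k z hz
      refine Set.mem_iUnion.mpr ⟨k + 1, ?_⟩
      exact mem_UB.mpr ⟨B k, List.mem_map.mpr ⟨k, List.mem_range.mpr (by omega), rfl⟩, hz⟩
  have h1 : Tendsto (fun m => μ (S m)) atTop (𝓝 (μ U)) := by
    have := tendsto_measure_iUnion_atTop (μ := μ) hS_mono
    rw [hS_union] at this
    exact this
  apply le_of_tendsto h1
  apply Eventually.of_forall
  intro m
  have hS_tend := UB_tendsto hcdf ((List.range m).map B).length _ le_rfl (hS_boxes m)
  have hENN : Tendsto (fun n => μs n (S m)) atTop (𝓝 (μ (S m))) := by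
    have h2 := (ENNReal.continuous_ofReal.tendsto _).comp hS_tend
    rw [show ENNReal.ofReal ((μ (S m)).toReal) = μ (S m) from
      ENNReal.ofReal_toReal (measure_ne_top _ _)] at h2
    apply h2.congr
    intro n
    exact ENNReal.ofReal_toReal (measure_ne_top _ _)
  calc μ (S m) = atTop.liminf (fun n => μs n (S m)) := hENN.liminf_eq.symm
  _ ≤ atTop.liminf (fun n => μs n U) :=
      liminf_le_liminf (Eventually.of_forall fun n => measure_mono (hS_sub m))
end generic

/-- For i.i.d. standard normal `Z_1, Z_2, …`, the pair of the normalized maximum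
`M_n = √(2 log n) Z_(n) − 2 log n + (1/2) log(4π log n)` and normalized minimum
`m_n = √(2 log n) Z_(1) + 2 log n − (1/2) log(4π log n)` converges jointly in distribution to
the law of `(Y, −W)` with `Y, W` independent standard Gumbel, i.e. to the product of the
standard Gumbel measure `G₃` and the pushforward of `G₃` under negation. -/
theorem normalized_extremes_joint_tendsto
    {Ω : Type*} [MeasurableSpace Ω] (P : Measure Ω) [IsProbabilityMeasure P]
    (Z : ℕ → Ω → ℝ)
    (hmeas : ∀ i, Measurable (Z i))
    (hindep : iIndepFun Z P)
    (hdist : ∀ i, Measure.map (Z i) P = gaussianReal 0 1)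
    (G : Measure ℝ) (hGprob : IsProbabilityMeasure G)
    (hGcdf : ∀ z : ℝ, G (Set.Iic z) = ENNReal.ofReal (Real.exp (-Real.exp (-z)))) :
    ∀ f : (ℝ × ℝ) →ᵇ ℝ,
      Tendsto (fun n : ℕ => ∫ ω, f
          (Real.sqrt (2 * Real.log n) * orderStat (fun j : Fin n => Z j ω) n
             - 2 * Real.log n + (1 / 2) * Real.log (4 * Real.pi * Real.log n),
           Real.sqrt (2 * Real.log n) * orderStat (fun j : Fin n => Z j ω) 1
             + 2 * Real.log n - (1 / 2) * Real.log (4 * Real.pi * Real.log n)) ∂P)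
        atTop (𝓝 (∫ x, f x ∂(G.prod (Measure.map (fun x : ℝ => -x) G)))) := by
  intro f
  haveI := hGprob
  haveI hnegG : IsProbabilityMeasure (Measure.map (fun x : ℝ => -x) G) :=
    Measure.isProbabilityMeasure_map measurable_neg.aemeasurable
  have hpm : ∀ n : ℕ, Measurable (pairMap Z n) := by
    intro n
    apply Measurable.prodMk
    · exact (((measurable_orderStat_max Z hmeas).const_mul _).sub_const _).add_const _
    · exact (((measurable_orderStat_min Z hmeas).const_mul _).add_const _).sub_const _
  set μs : ℕ → Measure (ℝ × ℝ) := fun n => Measure.map (pairMap Z n) P with hμs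
  haveI : ∀ n, IsProbabilityMeasure (μs n) := fun n =>
    Measure.isProbabilityMeasure_map (hpm n).aemeasurable
  have hcdf : ∀ x y : ℝ, Tendsto (fun n => (μs n (Set.Iic x ×ˢ Set.Iic y)).toReal) atTop
      (𝓝 (((G.prod (Measure.map (fun x : ℝ => -x) G)) (Set.Iic x ×ˢ Set.Iic y)).toReal)) := by
    intro x y
    rw [Glim_Iic hGcdf x y]
    apply (cdf_tendsto hmeas hindep hdist x y).congr'
    filter_upwards [eventually_ge_atTop 2] with n hn
    simp only [hμs]
    rw [Measure.map_apply (hpm n) (measurableSet_Iic.prod measurableSet_Iic),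
      pair_preimage Z hn x y]
  have key := BoundedContinuousFunction.tendsto_integral_of_forall_integral_le_liminf_integral
      (μ := G.prod (Measure.map (fun x : ℝ => -x) G)) (μs := μs)
      (fun g hg => integral_le_liminf_integral_of_forall_isOpen_measure_le_liminf_measure hg
        (fun U hU => le_liminf_open hcdf hU)) f
  apply key.congr
  intro n
  rw [hμs]
  rw [integral_map (hpm n).aemeasurable f.continuous.aestronglyMeasurable]
  rfl
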